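/- For 1 < p ≤ 2 with conjugate p* ≥ 2, and any d×m real matrix X, the inequality √2 · (Γ((p*+1)/2)/√π)^{1/p*} · ‖Xᵀ‖_{2,p*} ≤ √(p*−1) · ‖X‖_{p*,2} holds. -/

import Mathlib

open Real Finset

noncomputable def pNorm {n : ℕ} (p : ℝ) (v : Fin n → ℝ) : ℝ :=
  (∑ j, |v j| ^ p) ^ (1 / p)

noncomputable def signVec (m : ℕ) (s : Fin m → Bool) : Fin m → ℝ :=
  fun i => if s i then 1 else -1

noncomputable def expRademacher (m : ℕ) (f : (Fin m → ℝ) → ℝ) : ℝ :=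
  (∑ s : Fin m → Bool, f (signVec m s)) / 2 ^ m


lemma minkowski_gen {α κ : Type*} [Fintype κ] {r : ℝ} (hr : 1 ≤ r)
    (s : Finset α) (f : α → κ → ℝ) (hf : ∀ i j, 0 ≤ f i j) :
    (∑ j, (∑ i ∈ s, f i j) ^ r) ^ (1/r) ≤ ∑ i ∈ s, (∑ j, f i j ^ r) ^ (1/r) := by
  have hr0 : r ≠ 0 := by positivity
  induction s using Finset.cons_induction with
  | empty =>
      simp [Real.zero_rpow hr0, Real.zero_rpow (one_div_ne_zero hr0),
        Real.zero_rpow (inv_ne_zero hr0)]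
  | cons b t hnotmem ih =>
    simp only [Finset.sum_cons]
    have key : (∑ j, (f b j + ∑ i ∈ t, f i j) ^ r) ^ (1/r) ≤
        (∑ j, (f b j) ^ r) ^ (1/r) + (∑ j, (∑ i ∈ t, f i j) ^ r) ^ (1/r) := by
      have := Real.Lp_add_le (univ : Finset κ) (fun j => f b j)
        (fun j => ∑ i ∈ t, f i j) hr
      have habs : ∀ j : κ, |f b j + ∑ i ∈ t, f i j| = f b j + ∑ i ∈ t, f i j :=
        fun j => abs_of_nonneg (add_nonneg (hf b j) (sum_nonneg fun i _ => hf i j))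
      simpa [habs, abs_of_nonneg (hf b _),
        abs_of_nonneg (sum_nonneg fun i _ => hf i _)] using this
    calc (∑ j, (f b j + ∑ i ∈ t, f i j) ^ r) ^ (1/r)
        ≤ (∑ j, (f b j) ^ r) ^ (1/r) + (∑ j, (∑ i ∈ t, f i j) ^ r) ^ (1/r) := key
      _ ≤ (∑ j, (f b j) ^ r) ^ (1/r) + ∑ i ∈ t, (∑ j, f i j ^ r) ^ (1/r) := by
          exact add_le_add le_rfl ih
      _ = _ := rfl


lemma gamma_base (a : ℝ) (h1 : 1/2 ≤ a) (h2 : a ≤ 3/2) :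
    Real.Gamma (a + 1) ≤ Real.sqrt π * a ^ (a + 1/2) := by
  have hpi1 : (1:ℝ) ≤ Real.sqrt π := by
    rw [show (1:ℝ) = Real.sqrt 1 by simp]
    exact Real.sqrt_le_sqrt (by linarith [Real.pi_gt_three])
  have hpisq : (0:ℝ) < Real.sqrt π := by linarith
  have ha0 : (0:ℝ) < a := by linarith
  have hG32 : Real.Gamma (3/2) = Real.sqrt π / 2 := by
    have := Real.Gamma_add_one (s := 1/2) (by norm_num)
    rw [show (3:ℝ)/2 = 1/2 + 1 by ring, this, Real.Gamma_one_half_eq]; ring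
  have hG52 : Real.Gamma (5/2) = 3/4 * Real.sqrt π := by
    have := Real.Gamma_add_one (s := 3/2) (by norm_num)
    rw [show (5:ℝ)/2 = 3/2 + 1 by ring, this, hG32]; ring
  have hGpos : 0 < Real.Gamma (a + 1) := Real.Gamma_pos_of_pos (by linarith)
  have hrhspos : 0 < Real.sqrt π * a ^ (a + 1/2) :=
    mul_pos hpisq (Real.rpow_pos_of_pos ha0 _)
  rw [← Real.log_le_log_iff hGpos hrhspos, Real.log_mul (ne_of_gt hpisq)
    (ne_of_gt (Real.rpow_pos_of_pos ha0 _)), Real.log_rpow ha0,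
    Real.log_sqrt Real.pi_nonneg]
  have hlogpi : Real.log 2 ≤ Real.log π :=
    Real.log_le_log two_pos (by linarith [Real.pi_gt_three])
  have hlog2 : (0:ℝ) ≤ Real.log 2 := Real.log_nonneg (by norm_num)
  rcases le_total a 1 with hcase | hcase
  · -- interpolate between 3/2 and 2
    have hcvx := Real.convexOn_log_Gamma.2
      (Set.mem_Ioi.2 (show (0:ℝ) < 3/2 by norm_num))
      (Set.mem_Ioi.2 (show (0:ℝ) < 2 by norm_num))
      (show (0:ℝ) ≤ 2 - 2*a by linarith) (show (0:ℝ) ≤ 2*a - 1 by linarith)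
      (show (2 - 2*a) + (2*a - 1) = 1 by ring)
    simp only [smul_eq_mul, Function.comp_apply] at hcvx
    rw [show (2 - 2*a) * (3/2) + (2*a - 1) * 2 = a + 1 by ring, Real.Gamma_two,
      Real.log_one, hG32, Real.log_div (by positivity) (by norm_num),
      Real.log_sqrt Real.pi_nonneg] at hcvx
    -- chord bound for log a on [1/2, 1]
    have hchord : (2*a - 2) * Real.log 2 ≤ Real.log a := by
      have hccv := strictConcaveOn_log_Ioi.concaveOn.2
        (Set.mem_Ioi.2 (show (0:ℝ) < 1/2 by norm_num))
        (Set.mem_Ioi.2 (show (0:ℝ) < 1 by norm_num))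
        (show (0:ℝ) ≤ 2 - 2*a by linarith) (show (0:ℝ) ≤ 2*a - 1 by linarith)
        (show (2 - 2*a) + (2*a - 1) = 1 by ring)
      simp only [smul_eq_mul] at hccv
      rw [show (2 - 2*a) * (1/2) + (2*a - 1) * 1 = a by ring, Real.log_one,
        show (1:ℝ)/2 = 2⁻¹ by norm_num, Real.log_inv] at hccv
      linarith
    have hmul := mul_le_mul_of_nonneg_left hchord (by linarith : (0:ℝ) ≤ a + 1/2)
    nlinarith [mul_nonneg (mul_nonneg (by linarith : (0:ℝ) ≤ a - 1/2)
        (by linarith : (0:ℝ) ≤ a - 1/2)) hlog2,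
      mul_nonneg (by linarith : (0:ℝ) ≤ a - 1/2) (by linarith : (0:ℝ) ≤ Real.log π - Real.log 2)]
  · -- interpolate between 2 and 5/2
    have hcvx := Real.convexOn_log_Gamma.2
      (Set.mem_Ioi.2 (show (0:ℝ) < 2 by norm_num))
      (Set.mem_Ioi.2 (show (0:ℝ) < 5/2 by norm_num))
      (show (0:ℝ) ≤ 3 - 2*a by linarith) (show (0:ℝ) ≤ 2*a - 2 by linarith)
      (show (3 - 2*a) + (2*a - 2) = 1 by ring)
    simp only [smul_eq_mul, Function.comp_apply] at hcvx
    rw [show (3 - 2*a) * 2 + (2*a - 2) * (5/2) = a + 1 by ring, Real.Gamma_two,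
      Real.log_one, hG52, Real.log_mul (by norm_num) (by positivity),
      Real.log_sqrt Real.pi_nonneg] at hcvx
    have h34 : Real.log (3/4) ≤ 0 := Real.log_nonpos (by norm_num) (by norm_num)
    have hloga : 0 ≤ Real.log a := Real.log_nonneg hcase
    nlinarith [mul_nonneg (by linarith : (0:ℝ) ≤ 2*a - 2) (neg_nonneg.2 h34),
      mul_nonneg (by linarith : (0:ℝ) ≤ a + 1/2) hloga,
      mul_nonneg (by linarith : (0:ℝ) ≤ 3 - 2*a) (by linarith : (0:ℝ) ≤ Real.log π)]

lemma gamma_bound : ∀ a : ℝ, 1/2 ≤ a → Real.Gamma (a + 1) ≤ Real.sqrt π * a ^ (a + 1/2) := by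
  have key : ∀ n : ℕ, ∀ a : ℝ, 1/2 ≤ a → a ≤ 3/2 + n →
      Real.Gamma (a + 1) ≤ Real.sqrt π * a ^ (a + 1/2) := by
    intro n
    induction n with
    | zero => intro a h1 h2; exact gamma_base a h1 (by simpa using h2)
    | succ k ih =>
      intro a h1 h2
      rcases le_total a (3/2 + k) with h | h
      · exact ih a h1 h
      · have hk : (0:ℝ) ≤ (k:ℝ) := Nat.cast_nonneg k
        have ha1 : (3:ℝ)/2 ≤ a := by linarith
        have ha0 : (0:ℝ) < a := by linarith
        have hprev := ih (a - 1) (by linarith) (by push_cast at h2 ⊢; linarith)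
        rw [sub_add_cancel] at hprev
        rw [Real.Gamma_add_one (ne_of_gt ha0)]
        have hbase : (a - 1) ^ (a - 1 + 1/2) ≤ a ^ (a - 1 + 1/2) :=
          Real.rpow_le_rpow (by linarith) (by linarith) (by linarith)
        have hsplit : a ^ (a + 1/2) = a * a ^ (a - 1 + 1/2) := by
          rw [show a + 1/2 = 1 + (a - 1 + 1/2) by ring, Real.rpow_add ha0,
            Real.rpow_one]
        rw [hsplit]
        calc a * Real.Gamma a ≤ a * (Real.sqrt π * (a-1) ^ (a - 1 + 1/2)) :=
              mul_le_mul_of_nonneg_left hprev (le_of_lt ha0)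
          _ ≤ a * (Real.sqrt π * a ^ (a - 1 + 1/2)) := by
              have := mul_le_mul_of_nonneg_left hbase (Real.sqrt_nonneg π)
              exact mul_le_mul_of_nonneg_left this (le_of_lt ha0)
          _ = Real.sqrt π * (a * a ^ (a - 1 + 1/2)) := by ring
  intro a ha
  refine key ⌈a⌉₊ a ha ?_
  calc a ≤ ⌈a⌉₊ := Nat.le_ceil a
    _ ≤ 3/2 + ⌈a⌉₊ := by linarith

/-- The new bound is tighter:
√2 (Γ((p*+1)/2)/√π)^{1/p*} ‖Xᵀ‖_{2,p*} ≤ √(p*-1) ‖X‖_{p*,2} for 1 < p ≤ 2. -/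
theorem new_bound_tighter {d m : ℕ} (X : Matrix (Fin d) (Fin m) ℝ)
    (p ps : ℝ) (hp : 1 < p) (hp2 : p ≤ 2) (hconj : 1 / p + 1 / ps = 1) :
    Real.sqrt 2 * (Real.Gamma ((ps + 1) / 2) / Real.sqrt π) ^ (1 / ps) *
        pNorm ps (fun j : Fin d => pNorm 2 (fun i : Fin m => X j i)) ≤
      Real.sqrt (ps - 1) *
        pNorm 2 (fun i : Fin m => pNorm ps (fun j : Fin d => X j i)) := by
  -- basic facts about ps
  have hp0 : (0:ℝ) < p := by linarith
  have hinv : 1/ps = 1 - 1/p := by linarith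
  have hinv_pos : 0 < 1/ps := by
    rw [hinv]; have : 1/p < 1 := (div_lt_one hp0).mpr hp; linarith
  have hps_pos : 0 < ps := one_div_pos.mp hinv_pos
  have hps0 : ps ≠ 0 := ne_of_gt hps_pos
  have hps2 : 2 ≤ ps := by
    have h12 : 1/2 ≤ 1/p := by
      rw [div_le_div_iff₀ (by norm_num) hp0]; linarith
    have : 1/ps ≤ 1/2 := by rw [hinv]; linarith
    rw [div_le_div_iff₀ hps_pos (by norm_num)] at this; linarith
  -- the constant inequality
  have hsp : (0:ℝ) < Real.sqrt π := Real.sqrt_pos.mpr Real.pi_pos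
  have hconst : Real.sqrt 2 * (Real.Gamma ((ps + 1) / 2) / Real.sqrt π) ^ (1/ps) ≤
      Real.sqrt (ps - 1) := by
    have hgam := gamma_bound ((ps-1)/2) (by linarith)
    rw [show (ps-1)/2 + 1 = (ps+1)/2 by ring, show (ps-1)/2 + 1/2 = ps/2 by ring] at hgam
    have hdiv : Real.Gamma ((ps+1)/2) / Real.sqrt π ≤ ((ps-1)/2) ^ (ps/2 : ℝ) := by
      rw [div_le_iff₀ hsp, mul_comm]; exact hgam
    have hrp : (Real.Gamma ((ps+1)/2) / Real.sqrt π) ^ (1/ps) ≤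
        (((ps-1)/2) ^ (ps/2 : ℝ)) ^ (1/ps) :=
      Real.rpow_le_rpow
        (div_nonneg (Real.Gamma_pos_of_pos (by linarith)).le (Real.sqrt_nonneg _))
        hdiv (le_of_lt hinv_pos)
    have hsimp : (((ps-1)/2) ^ (ps/2 : ℝ)) ^ (1/ps) = Real.sqrt ((ps-1)/2) := by
      rw [← Real.rpow_mul (by linarith : (0:ℝ) ≤ (ps-1)/2),
        show ps/2 * (1/ps) = 1/2 by field_simp, Real.sqrt_eq_rpow]
    rw [hsimp] at hrp
    calc Real.sqrt 2 * (Real.Gamma ((ps + 1) / 2) / Real.sqrt π) ^ (1/ps)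
        ≤ Real.sqrt 2 * Real.sqrt ((ps-1)/2) :=
          mul_le_mul_of_nonneg_left hrp (Real.sqrt_nonneg 2)
      _ = Real.sqrt (ps - 1) := by
          rw [← Real.sqrt_mul (by norm_num : (0:ℝ) ≤ 2)]; congr 1; ring
  -- the norm inequality
  have hnorm : pNorm ps (fun j : Fin d => pNorm 2 (fun i : Fin m => X j i)) ≤
      pNorm 2 (fun i : Fin m => pNorm ps (fun j : Fin d => X j i)) := by
    unfold pNorm
    have hS : ∀ j : Fin d, (0:ℝ) ≤ ∑ i, |X j i| ^ (2:ℝ) :=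
      fun j => sum_nonneg fun i _ => Real.rpow_nonneg (abs_nonneg _) _
    have hV : ∀ i : Fin m, (0:ℝ) ≤ ∑ j, |X j i| ^ ps :=
      fun i => sum_nonneg fun j _ => Real.rpow_nonneg (abs_nonneg _) _
    have hL : (∑ j : Fin d, |(∑ i, |X j i| ^ (2:ℝ)) ^ (1/(2:ℝ))| ^ ps) =
        ∑ j : Fin d, (∑ i, |X j i| ^ (2:ℝ)) ^ (ps/2 : ℝ) := by
      refine Finset.sum_congr rfl fun j _ => ?_
      rw [abs_of_nonneg (Real.rpow_nonneg (hS j) _), ← Real.rpow_mul (hS j)]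
      congr 1; ring
    have hR : (∑ i : Fin m, |(∑ j, |X j i| ^ ps) ^ (1/ps)| ^ (2:ℝ)) =
        ∑ i : Fin m, (∑ j : Fin d, (|X j i| ^ (2:ℝ)) ^ (ps/2 : ℝ)) ^ (1/(ps/2) : ℝ) := by
      refine Finset.sum_congr rfl fun i _ => ?_
      rw [abs_of_nonneg (Real.rpow_nonneg (hV i) _), ← Real.rpow_mul (hV i)]
      have hterm : ∀ j : Fin d, (|X j i| ^ (2:ℝ)) ^ (ps/2 : ℝ) = |X j i| ^ ps := by
        intro j
        rw [← Real.rpow_mul (abs_nonneg _)]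
        congr 1; field_simp
      rw [Finset.sum_congr rfl fun j _ => hterm j]
      congr 1; field_simp
    rw [hL, hR]
    have hT : (0:ℝ) ≤ ∑ j : Fin d, (∑ i, |X j i| ^ (2:ℝ)) ^ (ps/2 : ℝ) :=
      sum_nonneg fun j _ => Real.rpow_nonneg (hS j) _
    have hsplit : (∑ j : Fin d, (∑ i, |X j i| ^ (2:ℝ)) ^ (ps/2 : ℝ)) ^ (1/ps) =
        ((∑ j : Fin d, (∑ i, |X j i| ^ (2:ℝ)) ^ (ps/2 : ℝ)) ^ (1/(ps/2) : ℝ)) ^ (1/(2:ℝ)) := by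
      rw [← Real.rpow_mul hT]
      congr 1; field_simp
    rw [hsplit]
    refine Real.rpow_le_rpow (Real.rpow_nonneg hT _) ?_ (by norm_num)
    have hmink := minkowski_gen (show (1:ℝ) ≤ ps/2 by linarith) (univ : Finset (Fin m))
      (fun i j => |X j i| ^ (2:ℝ)) (fun i j => Real.rpow_nonneg (abs_nonneg _) _)
    exact hmink
  -- combine
  have hBnonneg : 0 ≤ pNorm ps (fun j : Fin d => pNorm 2 (fun i : Fin m => X j i)) :=
    Real.rpow_nonneg (sum_nonneg fun j _ => Real.rpow_nonneg (abs_nonneg _) _) _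
  exact mul_le_mul hconst hnorm hBnonneg (Real.sqrt_nonneg _)
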